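/- Let N be an integer with N ≥ 2. Then N is monomially irreducible if and only if N is a prime number or N ∈ {4, 6, 8, 12, 24}. -/

import Mathlib

open Matrix

/-- The elementary matrix `[[a, -1], [1, 0]]` over `ZMod N`. -/
def genMat {N : ℕ} (a : ZMod N) : Matrix (Fin 2) (Fin 2) (ZMod N) :=
  !![a, -1; 1, 0]

/-- `Mword [a₁, …, aₙ]` is the matrix `Mₙ(a₁, …, aₙ) = genMat aₙ * ⋯ * genMat a₁`. -/
def Mword {N : ℕ} (l : List (ZMod N)) : Matrix (Fin 2) (Fin 2) (ZMod N) :=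
  (l.reverse.map genMat).prod

/-- A tuple (encoded as a list) is a solution of `(E_N)` if its matrix is `±Id`. -/
def IsSolutionE {N : ℕ} (l : List (ZMod N)) : Prop :=
  Mword l = 1 ∨ Mword l = -1

/-- The size of the `k`-monomial minimal solution of `(E_N)`: the least positive `n`
such that the constant `n`-tuple `(k, …, k)` is a solution of `(E_N)`. -/
noncomputable def monomialSize (N : ℕ) (k : ZMod N) : ℕ :=
  sInf {n : ℕ | 0 < n ∧ IsSolutionE (List.replicate n k)}

/-- The `k`-monomial minimal solution of `(E_N)`. -/
noncomputable def monoSol (N : ℕ) (k : ZMod N) : List (ZMod N) :=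
  List.replicate (monomialSize N k) k

/-- The sum `⊕` of two tuples:
`(a₁,…,aₘ) ⊕ (b₁,…,bₗ) = (a₁+bₗ, a₂, …, aₘ₋₁, aₘ+b₁, b₂, …, bₗ₋₁)`. -/
def oplus {N : ℕ} (a b : List (ZMod N)) : List (ZMod N) :=
  (a.headD 0 + b.getLastD 0) ::
    ((a.drop 1).dropLast ++ (a.getLastD 0 + b.headD 0) :: (b.drop 1).dropLast)

/-- Two tuples are equivalent (`∼`) if one is obtained from the other by a cyclic
permutation, possibly composed with order reversal. -/
def TupEquiv {N : ℕ} (c d : List (ZMod N)) : Prop :=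
  (∃ i, d = c.rotate i) ∨ (∃ i, d = c.reverse.rotate i)

/-- A tuple is reducible if it is equivalent to a sum `a ⊕ b` where `b` is a solution of
`(E_N)` and both `a`, `b` have length at least `3`. -/
def IsReducibleE {N : ℕ} (c : List (ZMod N)) : Prop :=
  ∃ a b : List (ZMod N), 3 ≤ a.length ∧ 3 ≤ b.length ∧ IsSolutionE b ∧
    TupEquiv c (oplus a b)

/-- An irreducible solution of `(E_N)`: a solution of size at least `3` that is not
reducible (the solution `(0,0)` is not considered irreducible). -/
def IsIrreducibleE {N : ℕ} (c : List (ZMod N)) : Prop :=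
  IsSolutionE c ∧ 3 ≤ c.length ∧ ¬ IsReducibleE c

/-- A reducible solution of `(E_N)`: a solution that is not irreducible. -/
def IsReducibleSol {N : ℕ} (c : List (ZMod N)) : Prop :=
  IsSolutionE c ∧ ¬ IsIrreducibleE c

/-- `N` is monomially irreducible if for every nonzero `k ∈ ZMod N` the `k`-monomial
minimal solution of `(E_N)` is irreducible. -/
def MonomiallyIrreducible (N : ℕ) : Prop :=
  ∀ k : ZMod N, k ≠ 0 → IsIrreducibleE (monoSol N k)

/-- `N` is quasi monomially irreducible if for every integer `k` coprime to `N` the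
`(k mod N)`-monomial minimal solution of `(E_N)` is irreducible. -/
def QuasiMonomiallyIrreducible (N : ℕ) : Prop :=
  ∀ k : ℤ, Int.gcd k (N : ℤ) = 1 → IsIrreducibleE (monoSol N (k : ZMod N))

/-- `N` is semi monomially irreducible: if `N` is even but not divisible by `4`, this
requires that for every integer `a` coprime to `N/2` the `(2a mod N)`-monomial minimal
solution of `(E_N)` is irreducible; otherwise (i.e. `N` odd or divisible by `4`), it
requires the same for every integer `a` coprime to `N`. -/
def SemiMonomiallyIrreducible (N : ℕ) : Prop :=
  if 2 ∣ N ∧ ¬ (4 ∣ N) then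
    ∀ a : ℤ, Int.gcd a ((N / 2 : ℕ) : ℤ) = 1 →
      IsIrreducibleE (monoSol N ((2 * a : ℤ) : ZMod N))
  else
    ∀ a : ℤ, Int.gcd a (N : ℤ) = 1 →
      IsIrreducibleE (monoSol N ((2 * a : ℤ) : ZMod N))

/-! ### Auxiliary development -/

/-- The continuant sequence: `c 0 = 0`, `c 1 = 1`, `c (n+2) = k * c (n+1) - c n`. -/
def cseq {R : Type*} [CommRing R] (k : R) : ℕ → R
  | 0 => 0
  | 1 => 1
  | (n+2) => k * cseq k (n+1) - cseq k n

section CSeq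
variable {R S : Type*} [CommRing R] [CommRing S]

@[simp] lemma cseq_zero (k : R) : cseq k 0 = 0 := rfl
@[simp] lemma cseq_one (k : R) : cseq k 1 = 1 := rfl
lemma cseq_add_two (k : R) (n : ℕ) : cseq k (n+2) = k * cseq k (n+1) - cseq k n := rfl

lemma map_cseq (φ : R →+* S) (k : R) (n : ℕ) : φ (cseq k n) = cseq (φ k) n := by
  have H : ∀ m, φ (cseq k m) = cseq (φ k) m ∧ φ (cseq k (m+1)) = cseq (φ k) (m+1) := by
    intro m
    induction m with
    | zero => simp
    | succ i ih =>
      refine ⟨ih.2, ?_⟩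
      rw [cseq_add_two, cseq_add_two, map_sub, _root_.map_mul, ih.1, ih.2]
  exact (H n).1

lemma cseq_two (n : ℕ) : cseq (2 : R) n = (n : R) := by
  have H : ∀ m, cseq (2:R) m = (m : R) ∧ cseq (2:R) (m+1) = ((m+1 : ℕ) : R) := by
    intro m
    induction m with
    | zero => simp
    | succ i ih =>
      refine ⟨ih.2, ?_⟩
      rw [cseq_add_two, ih.1, ih.2]
      push_cast; ring
  exact (H n).1

lemma cseq_neg (k : R) (n : ℕ) : cseq (-k) n = (-1)^(n+1) * cseq k n := by
  have H : ∀ m, cseq (-k) m = (-1)^(m+1) * cseq k m ∧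
      cseq (-k) (m+1) = (-1)^(m+2) * cseq k (m+1) := by
    intro m
    induction m with
    | zero => simp
    | succ i ih =>
      refine ⟨ih.2, ?_⟩
      rw [cseq_add_two, cseq_add_two, ih.1, ih.2]
      ring
  exact (H n).1

lemma cseq_one_add_three (n : ℕ) : cseq (1 : R) (n+3) = - cseq 1 n := by
  have h1 : n + 3 = (n+1) + 2 := by ring
  rw [h1, cseq_add_two, cseq_add_two]
  ring

lemma cseq_one_add_six (n : ℕ) : cseq (1 : R) (n+6) = cseq 1 n := by
  have h1 : n + 6 = (n+3) + 3 := by ring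
  rw [h1, cseq_one_add_three, cseq_one_add_three, neg_neg]

lemma cseq_one_mul_six_add (t r : ℕ) : cseq (1 : R) (6*t + r) = cseq 1 r := by
  induction t with
  | zero => simp
  | succ i ih =>
    have : 6*(i+1) + r = (6*i + r) + 6 := by ring
    rw [this, cseq_one_add_six, ih]

lemma cseq_one_mul_three_add (t r : ℕ) : cseq (1 : R) (3*t + r) = (-1)^t * cseq 1 r := by
  induction t with
  | zero => simp
  | succ i ih =>
    have : 3*(i+1) + r = (3*i + r) + 3 := by ring
    rw [this, cseq_one_add_three, ih]
    ring

lemma cseq_det (k : R) (n : ℕ) : cseq k (n+2) * cseq k n = cseq k (n+1)^2 - 1 := by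
  induction n with
  | zero => simp
  | succ i ih =>
    have h : cseq k (i+3) = k * cseq k (i+2) - cseq k (i+1) := cseq_add_two k (i+1)
    have h2 : cseq k (i+2) = k * cseq k (i+1) - cseq k i := cseq_add_two k i
    have goal : cseq k (i+3) * cseq k (i+1) = cseq k (i+2)^2 - 1 := by
      linear_combination ih + cseq k (i+1) * h - cseq k (i+2) * h2
    exact goal

end CSeq

section MatrixFacts
variable {N : ℕ}

lemma matrix2_eq_iff {R : Type*} (a b c d e f g h : R) :
    !![a,b;c,d] = !![e,f;g,h] ↔ (a = e ∧ b = f ∧ c = g ∧ d = h) := by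
  constructor
  · intro hh
    exact ⟨congrFun (congrFun hh 0) 0, congrFun (congrFun hh 0) 1,
      congrFun (congrFun hh 1) 0, congrFun (congrFun hh 1) 1⟩
  · rintro ⟨rfl, rfl, rfl, rfl⟩; rfl

lemma neg_one_fin_two {R : Type*} [Ring R] :
    -(!![(1:R), 0; 0, 1]) = !![-1, 0; 0, -1] := by
  ext r c
  fin_cases r <;> fin_cases c <;> simp

lemma genMat_pow (k : ZMod N) (j : ℕ) :
    (genMat k)^(j+1) = !![cseq k (j+2), -(cseq k (j+1)); cseq k (j+1), -(cseq k j)] := by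
  induction j with
  | zero =>
    rw [pow_one]
    have h2 : cseq k 2 = k := by rw [cseq_add_two]; simp
    rw [h2]
    simp [genMat]
  | succ i ih =>
    have h3 : cseq k (i+3) = k * cseq k (i+2) - cseq k (i+1) := cseq_add_two k (i+1)
    have h2 : cseq k (i+2) = k * cseq k (i+1) - cseq k i := cseq_add_two k i
    rw [pow_succ, ih, show genMat k = !![k,-1;1,0] from rfl, Matrix.mul_fin_two,
      show i+1+2 = i+3 from rfl, show i+1+1 = i+2 from rfl, matrix2_eq_iff]
    refine ⟨by linear_combination -h3, by ring, by linear_combination -h2, by ring⟩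

lemma Mword_replicate (k : ZMod N) (n : ℕ) :
    Mword (List.replicate n k) = (genMat k)^n := by
  simp [Mword, List.reverse_replicate, List.map_replicate, List.prod_replicate]

lemma Mword_sandwich (x y : ZMod N) (m : List (ZMod N)) :
    Mword (x :: (m ++ [y])) = genMat y * Mword m * genMat x := by
  simp [Mword, List.reverse_cons, List.reverse_append, mul_assoc]

lemma isSolution_replicate_iff (k : ZMod N) (j : ℕ) :
    IsSolutionE (List.replicate (j+1) k) ↔
      (cseq k (j+1) = 0 ∧ (cseq k (j+2) = 1 ∨ cseq k (j+2) = -1)) := by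
  have hj : cseq k j - k * cseq k (j+1) + cseq k (j+2) = 0 := by
    rw [cseq_add_two]; ring
  rw [IsSolutionE, Mword_replicate, genMat_pow, Matrix.one_fin_two, neg_one_fin_two,
    matrix2_eq_iff, matrix2_eq_iff]
  constructor
  · rintro (⟨h00, _, h10, _⟩|⟨h00, _, h10, _⟩)
    · exact ⟨h10, Or.inl h00⟩
    · exact ⟨h10, Or.inr h00⟩
  · rintro ⟨h0, h1|h1⟩
    · exact Or.inl ⟨h1, by rw [h0, neg_zero], h0, by linear_combination -hj - k*h0 + h1⟩
    · exact Or.inr ⟨h1, by rw [h0, neg_zero], h0, by linear_combination -hj - k*h0 + h1⟩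

end MatrixFacts

section Size
variable {N : ℕ}

lemma exists_sol [NeZero N] (k : ZMod N) :
    ∃ n, 0 < n ∧ IsSolutionE (List.replicate n k) := by
  have hdet : IsUnit (genMat k) := by
    rw [Matrix.isUnit_iff_isUnit_det]
    have : (genMat k).det = 1 := by simp [genMat, Matrix.det_fin_two_of]
    rw [this]; exact isUnit_one
  obtain ⟨u, hu⟩ := hdet
  refine ⟨orderOf u, orderOf_pos u, Or.inl ?_⟩
  rw [Mword_replicate, ← hu, ← Units.val_pow_eq_pow_val, pow_orderOf_eq_one, Units.val_one]

lemma size_mem [NeZero N] (k : ZMod N) :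
    0 < monomialSize N k ∧ IsSolutionE (List.replicate (monomialSize N k) k) := by
  have hne : {n : ℕ | 0 < n ∧ IsSolutionE (List.replicate n k)}.Nonempty := by
    obtain ⟨n, h1, h2⟩ := exists_sol k
    exact ⟨n, h1, h2⟩
  exact Nat.sInf_mem hne

lemma size_le (k : ZMod N) {m : ℕ} (hm : 0 < m)
    (h : IsSolutionE (List.replicate m k)) : monomialSize N k ≤ m :=
  Nat.sInf_le ⟨hm, h⟩

lemma le_size [NeZero N] (k : ZMod N) {i : ℕ}
    (h : ∀ m, 0 < m → IsSolutionE (List.replicate m k) → i ≤ m) :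
    i ≤ monomialSize N k :=
  h _ (size_mem k).1 (size_mem k).2

lemma three_le_size [Fact (1 < N)] (k : ZMod N) (hk : k ≠ 0) :
    3 ≤ monomialSize N k := by
  apply le_size
  intro m hm hsol
  match m, hm with
  | 1, _ =>
    exfalso
    have h := ((isSolution_replicate_iff k 0).mp hsol).1
    simp at h
  | 2, _ =>
    exfalso
    have h := ((isSolution_replicate_iff k 1).mp hsol).1
    rw [cseq_add_two] at h
    simp at h
    exact hk h
  | (m+3), _ => omega

end Size

/-- The key arithmetic reformulation of reducibility of the monomial solution. -/
def RedCond (N : ℕ) (k : ZMod N) : Prop :=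
  ∃ i, 2 ≤ i ∧ i + 2 ≤ monomialSize N k ∧ (cseq k i = 1 ∨ cseq k i = -1)

section RedIff
variable {N : ℕ}

lemma sandwich_entry (x y : ZMod N) (M : Matrix (Fin 2) (Fin 2) (ZMod N)) :
    (genMat y * M * genMat x) 1 1 = -(M 0 0) := by
  rw [Matrix.eta_fin_two M, show genMat y = !![y,-1;1,0] from rfl,
    show genMat x = !![x,-1;1,0] from rfl, Matrix.mul_fin_two, Matrix.mul_fin_two]
  simp

lemma isReducible_replicate_iff [Fact (1 < N)] (k : ZMod N) (n : ℕ) (hn : 3 ≤ n) :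
    IsReducibleE (List.replicate n k) ↔
      ∃ i, 2 ≤ i ∧ i + 2 ≤ n ∧ (cseq k i = 1 ∨ cseq k i = -1) := by
  constructor
  · rintro ⟨a, b, ha, hb, hbsol, htup⟩
    have heq : oplus a b = List.replicate n k := by
      rcases htup with ⟨t, ht⟩ | ⟨t, ht⟩
      · rw [List.rotate_replicate] at ht; exact ht
      · rw [List.reverse_replicate, List.rotate_replicate] at ht; exact ht
    obtain ⟨x, t, rfl⟩ := List.exists_cons_of_ne_nil
      (show b ≠ [] by intro h; rw [h] at hb; simp at hb)
    rcases List.eq_nil_or_concat t with rfl | ⟨mid, y, hty⟩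
    · simp at hb
    rw [List.concat_eq_append] at hty
    subst hty
    have hblen : (x :: (mid ++ [y])).length = mid.length + 2 := by simp
    have hmidlen : 1 ≤ mid.length := by rw [hblen] at hb; omega
    obtain ⟨j', hJ⟩ : ∃ j', mid.length = j' + 1 := ⟨mid.length - 1, by omega⟩
    have hdrop : ((x :: (mid ++ [y])).drop 1).dropLast = mid := by
      simp [List.dropLast_concat]
    have hrep := List.eq_replicate_iff.mp heq
    have hmid : mid = List.replicate mid.length k := by
      rw [List.eq_replicate_iff]
      refine ⟨rfl, fun c hc => hrep.2 c ?_⟩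
      unfold oplus
      rw [hdrop]
      simp [hc]
    have hlen : (oplus a (x :: (mid ++ [y]))).length
        = 1 + ((a.length - 1 - 1) + (1 + mid.length)) := by
      simp [oplus]
      omega
    have hMw : Mword (x :: (mid ++ [y]))
        = genMat y * (genMat k)^(j'+1) * genMat x := by
      rw [Mword_sandwich]
      rw [hmid, Mword_replicate, hJ]
    have hkey : cseq k (j'+2) = 1 ∨ cseq k (j'+2) = -1 := by
      rcases hbsol with h | h
      · rw [hMw, genMat_pow] at h
        have e := congrFun (congrFun h 1) 1
        rw [sandwich_entry, Matrix.one_apply_eq] at e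
        simp at e
        right; linear_combination -e
      · rw [hMw, genMat_pow] at h
        have e := congrFun (congrFun h 1) 1
        rw [sandwich_entry, Matrix.neg_apply, Matrix.one_apply_eq] at e
        simp at e
        left; exact e
    refine ⟨j'+2, by omega, ?_, hkey⟩
    rw [hrep.1] at hlen
    omega
  · rintro ⟨i, hi2, hin, hδ⟩
    obtain ⟨j, rfl⟩ : ∃ j, i = j + 2 := ⟨i - 2, by omega⟩
    have hdet := cseq_det k j
    set g := cseq k (j+1) with hg
    have hneg1 : (-1 : Matrix (Fin 2) (Fin 2) (ZMod N)) = !![-1,0;0,-1] := by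
      rw [← neg_one_fin_two, ← Matrix.one_fin_two]
    rcases hδ with h1 | h1
    · have hcj : cseq k j = g^2 - 1 := by linear_combination hdet - cseq k j * h1
      refine ⟨(k - g) :: (List.replicate (n-j-3) k ++ [k - g]),
        g :: (List.replicate (j+1) k ++ [g]), by simp; omega, by simp, Or.inr ?_, ?_⟩
      · rw [Mword_sandwich, Mword_replicate, genMat_pow, h1, hcj]
        rw [show genMat g = !![g,-1;1,0] from rfl, Matrix.mul_fin_two,
          Matrix.mul_fin_two, hneg1, matrix2_eq_iff]
        refine ⟨by ring, by ring, by ring, by ring⟩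
      · left
        refine ⟨0, ?_⟩
        rw [List.rotate_zero]
        unfold oplus
        rw [show ((k-g) :: (List.replicate (n-j-3) k ++ [k - g])).headD 0 = k - g from rfl]
        rw [show (g :: (List.replicate (j+1) k ++ [g])).getLastD 0 = g by
          rw [← List.cons_append, List.getLastD_concat]]
        rw [show ((k-g) :: (List.replicate (n-j-3) k ++ [k - g])).getLastD 0 = k - g by
          rw [← List.cons_append, List.getLastD_concat]]
        rw [show (g :: (List.replicate (j+1) k ++ [g])).headD 0 = g from rfl]
        rw [show (((k-g) :: (List.replicate (n-j-3) k ++ [k - g])).drop 1).dropLast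
          = List.replicate (n-j-3) k by simp [List.dropLast_concat]]
        rw [show ((g :: (List.replicate (j+1) k ++ [g])).drop 1).dropLast
          = List.replicate (j+1) k by simp [List.dropLast_concat]]
        rw [show k - g + g = k by ring]
        rw [List.eq_replicate_iff]
        constructor
        · simp; omega
        · intro c hc
          rcases List.mem_cons.mp hc with rfl | hc'
          · rfl
          rcases List.mem_append.mp hc' with hc'' | hc''
          · exact List.eq_of_mem_replicate hc''
          rcases List.mem_cons.mp hc'' with rfl | hc'''
          · rfl
          · exact List.eq_of_mem_replicate hc'''
    · have hcj : cseq k j = 1 - g^2 := by linear_combination -hdet + cseq k j * h1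
      refine ⟨(k + g) :: (List.replicate (n-j-3) k ++ [k + g]),
        (-g) :: (List.replicate (j+1) k ++ [-g]), by simp; omega, by simp, Or.inl ?_, ?_⟩
      · rw [Mword_sandwich, Mword_replicate, genMat_pow, h1, hcj]
        rw [show genMat (-g) = !![-g,-1;1,0] from rfl, Matrix.mul_fin_two,
          Matrix.mul_fin_two, Matrix.one_fin_two, matrix2_eq_iff]
        refine ⟨by ring, by ring, by ring, by ring⟩
      · left
        refine ⟨0, ?_⟩
        rw [List.rotate_zero]
        unfold oplus
        rw [show ((k+g) :: (List.replicate (n-j-3) k ++ [k + g])).headD 0 = k + g from rfl]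
        rw [show ((-g) :: (List.replicate (j+1) k ++ [-g])).getLastD 0 = -g by
          rw [← List.cons_append, List.getLastD_concat]]
        rw [show ((k+g) :: (List.replicate (n-j-3) k ++ [k + g])).getLastD 0 = k + g by
          rw [← List.cons_append, List.getLastD_concat]]
        rw [show ((-g) :: (List.replicate (j+1) k ++ [-g])).headD 0 = -g from rfl]
        rw [show (((k+g) :: (List.replicate (n-j-3) k ++ [k + g])).drop 1).dropLast
          = List.replicate (n-j-3) k by simp [List.dropLast_concat]]
        rw [show (((-g) :: (List.replicate (j+1) k ++ [-g])).drop 1).dropLast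
          = List.replicate (j+1) k by simp [List.dropLast_concat]]
        rw [show k + g + -g = k by ring]
        rw [List.eq_replicate_iff]
        constructor
        · simp; omega
        · intro c hc
          rcases List.mem_cons.mp hc with rfl | hc'
          · rfl
          rcases List.mem_append.mp hc' with hc'' | hc''
          · exact List.eq_of_mem_replicate hc''
          rcases List.mem_cons.mp hc'' with rfl | hc'''
          · rfl
          · exact List.eq_of_mem_replicate hc'''

lemma isIrr_mono_iff [Fact (1 < N)] (k : ZMod N) (hk : k ≠ 0) :
    IsIrreducibleE (monoSol N k) ↔ ¬ RedCond N k := by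
  haveI : NeZero N := ⟨by have := Fact.out (p := 1 < N); omega⟩
  have h3 := three_le_size k hk
  have hs := size_mem k
  unfold IsIrreducibleE monoSol RedCond
  rw [List.length_replicate]
  rw [isReducible_replicate_iff k _ h3]
  constructor
  · rintro ⟨_, _, hnred⟩
    exact hnred
  · intro hnr
    exact ⟨hs.2, h3, hnr⟩

lemma monoIrr_iff {N : ℕ} [Fact (1 < N)] :
    MonomiallyIrreducible N ↔ ∀ k : ZMod N, k ≠ 0 → ¬ RedCond N k := by
  unfold MonomiallyIrreducible
  refine forall_congr' fun k => ?_
  constructor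
  · intro h hk
    exact (isIrr_mono_iff k hk).mp (h hk)
  · intro h hk
    exact (isIrr_mono_iff k hk).mpr (h hk)

end RedIff

section Witnesses

/-- Family A/B: `k ≠ 0`, `k² = 0`, `2k ≠ 0` gives reducibility. -/
lemma red_of_sq_zero {N : ℕ} [Fact (1 < N)] (k : ZMod N) (hk : k ≠ 0)
    (hsq : k * k = 0) (h2k : 2 * k ≠ 0) : RedCond N k := by
  haveI : NeZero N := ⟨by have := Fact.out (p := 1 < N); omega⟩
  have c2 : cseq k 2 = k := by rw [cseq_add_two]; simp
  have c3 : cseq k 3 = -1 := by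
    rw [show (3:ℕ) = 1 + 2 from rfl, cseq_add_two, c2, cseq_one]
    linear_combination hsq
  have c4 : cseq k 4 = -(2*k) := by
    rw [show (4:ℕ) = 2 + 2 from rfl, cseq_add_two, c3, c2]; ring
  refine ⟨3, by norm_num, ?_, Or.inr c3⟩
  apply le_size
  intro m hm hsol
  match m, hm with
  | 1, _ =>
    exfalso
    have h := ((isSolution_replicate_iff k 0).mp hsol).1
    simp at h
  | 2, _ =>
    exfalso
    have h := ((isSolution_replicate_iff k 1).mp hsol).1
    rw [c2] at h
    exact hk h
  | 3, _ =>
    exfalso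
    have h := ((isSolution_replicate_iff k 2).mp hsol).1
    rw [c3, neg_eq_zero] at h
    exact one_ne_zero h
  | 4, _ =>
    exfalso
    have h := ((isSolution_replicate_iff k 3).mp hsol).1
    rw [c4, neg_eq_zero] at h
    exact h2k h
  | (m+5), _ => omega

lemma zmod_eq_of_casts {p d : ℕ} [NeZero (p*d)] (cop : Nat.Coprime p d)
    {x y : ZMod (p*d)}
    (h1 : ZMod.castHom (dvd_mul_right p d) (ZMod p) x = ZMod.castHom (dvd_mul_right p d) (ZMod p) y)
    (h2 : ZMod.castHom (dvd_mul_left d p) (ZMod d) x = ZMod.castHom (dvd_mul_left d p) (ZMod d) y) :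
    x = y := by
  haveI : NeZero p := ⟨fun h => NeZero.ne (p*d) (by rw [h, zero_mul])⟩
  haveI : NeZero d := ⟨fun h => NeZero.ne (p*d) (by rw [h, mul_zero])⟩
  have hz1 : ZMod.castHom (dvd_mul_right p d) (ZMod p) (x - y) = 0 := by
    rw [map_sub, h1, sub_self]
  have hz2 : ZMod.castHom (dvd_mul_left d p) (ZMod d) (x - y) = 0 := by
    rw [map_sub, h2, sub_self]
  have e1 : (((x-y).val : ℕ) : ZMod p) = 0 := by
    rw [ZMod.natCast_val]
    rw [ZMod.castHom_apply] at hz1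
    exact hz1
  have e2 : (((x-y).val : ℕ) : ZMod d) = 0 := by
    rw [ZMod.natCast_val]
    rw [ZMod.castHom_apply] at hz2
    exact hz2
  have d1 : p ∣ (x-y).val := (ZMod.natCast_eq_zero_iff _ _).mp e1
  have d2 : d ∣ (x-y).val := (ZMod.natCast_eq_zero_iff _ _).mp e2
  have dpd : p*d ∣ (x-y).val := Nat.Coprime.mul_dvd_of_dvd_of_dvd cop d1 d2
  have hlt : (x-y).val < p*d := ZMod.val_lt _
  have hv : (x-y).val = 0 := Nat.eq_zero_of_dvd_of_lt dpd hlt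
  have := (ZMod.val_eq_zero _).mp hv
  exact sub_eq_zero.mp this

lemma prime_mod_facts {p : ℕ} (hp : p.Prime) (hp5 : 5 ≤ p) :
    p % 2 = 1 ∧ p % 3 ≠ 0 := by
  constructor
  · rcases Nat.Prime.eq_one_or_self_of_dvd hp 2 with h
    have h2 : ¬ 2 ∣ p := by
      intro hdvd
      rcases (Nat.Prime.eq_one_or_self_of_dvd hp 2 hdvd) with h | h <;> omega
    omega
  · intro h3
    have hdvd : 3 ∣ p := Nat.dvd_of_mod_eq_zero h3
    rcases (Nat.Prime.eq_one_or_self_of_dvd hp 3 hdvd) with h | h <;> omega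

/-- Family C, `d ≥ 3`. -/
lemma red_case_C3 {p d : ℕ} (hp : p.Prime) (hp5 : 5 ≤ p) (hd : 3 ≤ d)
    (cop : Nat.Coprime p d) (k : ZMod (p*d))
    (hkp : ZMod.castHom (dvd_mul_right p d) (ZMod p) k = 2)
    (hkd : ZMod.castHom (dvd_mul_left d p) (ZMod d) k = 1) :
    k ≠ 0 ∧ RedCond (p*d) k := by
  haveI hF : Fact (1 < p*d) := ⟨by have := Nat.mul_le_mul hp5 hd; omega⟩
  haveI : NeZero (p*d) := ⟨by have := Nat.mul_le_mul hp5 hd; omega⟩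
  haveI : NeZero p := ⟨by omega⟩
  haveI : Fact (1 < p) := ⟨by omega⟩
  haveI : Fact (1 < d) := ⟨by omega⟩
  obtain ⟨hp2, hp3⟩ := prime_mod_facts hp hp5
  have hφpc : ∀ m, ZMod.castHom (dvd_mul_right p d) (ZMod p) (cseq k m)
      = cseq (2 : ZMod p) m := fun m => by rw [map_cseq, hkp]
  have hφdc : ∀ m, ZMod.castHom (dvd_mul_left d p) (ZMod d) (cseq k m)
      = cseq (1 : ZMod d) m := fun m => by rw [map_cseq, hkd]
  -- values of cseq 1 over ZMod d
  have v2 : cseq (1 : ZMod d) 2 = 1 := by rw [cseq_add_two]; simp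
  have v3 : cseq (1 : ZMod d) 3 = 0 := by
    rw [show (3:ℕ) = 1+2 from rfl, cseq_add_two, v2]; simp
  have v4 : cseq (1 : ZMod d) 4 = -1 := by
    rw [show (4:ℕ) = 2+2 from rfl, cseq_add_two, v3, v2]; ring
  have v5 : cseq (1 : ZMod d) 5 = -1 := by
    rw [show (5:ℕ) = 3+2 from rfl, cseq_add_two, v4, v3]; ring
  have hk0 : k ≠ 0 := by
    intro h
    rw [h, map_zero] at hkp
    have h2 : ((2:ℕ) : ZMod p) = 0 := by push_cast; rw [← hkp]
    have := (ZMod.natCast_eq_zero_iff _ _).mp h2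
    have := Nat.le_of_dvd (by norm_num) this
    omega
  refine ⟨hk0, ?_⟩
  have hp6 : p % 6 = 1 ∨ p % 6 = 5 := by omega
  obtain ⟨i, t, s, hi2, hiub, hi6, hip⟩ :
      ∃ i t s, 2 ≤ i ∧ i + 2 ≤ 6*p ∧ i = 6*t + 2 ∧ i = p*s + 1 := by
    rcases hp6 with h | h
    · exact ⟨p+1, p/6, 1, by omega, by omega, by omega, by omega⟩
    · exact ⟨5*p+1, 5*(p/6)+4, 5, by omega, by omega, by omega, by omega⟩
  have hci : cseq k i = 1 := by
    apply zmod_eq_of_casts cop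
    · rw [_root_.map_one, hφpc, cseq_two, hip]
      push_cast [ZMod.natCast_self]
      ring
    · rw [_root_.map_one, hφdc, hi6, cseq_one_mul_six_add, v2]
  refine ⟨i, hi2, ?_, Or.inl hci⟩
  apply le_size
  intro m hm hsol
  by_contra hcon
  push_neg at hcon
  obtain ⟨j, rfl⟩ : ∃ j, m = j + 1 := ⟨m-1, by omega⟩
  have hs := (isSolution_replicate_iff k j).mp hsol
  have hc0 := hs.1
  have hpj : ((j+1 : ℕ) : ZMod p) = 0 := by
    have := congrArg (ZMod.castHom (dvd_mul_right p d) (ZMod p)) hc0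
    rw [hφpc, map_zero, cseq_two] at this
    exact_mod_cast this
  have hpdvd : p ∣ (j+1) := (ZMod.natCast_eq_zero_iff _ _).mp hpj
  have hδ1 : cseq k (j+2) = 1 := by
    rcases hs.2 with h | h
    · exact h
    · exfalso
      have hcast := congrArg (ZMod.castHom (dvd_mul_right p d) (ZMod p)) h
      rw [hφpc, cseq_two, map_neg, _root_.map_one] at hcast
      have h2 : ((2:ℕ) : ZMod p) = 0 := by
        push_cast at hcast hpj ⊢
        linear_combination hcast - hpj
      have := (ZMod.natCast_eq_zero_iff _ _).mp h2
      have := Nat.le_of_dvd (by norm_num) this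
      omega
  have hdc0 : cseq (1 : ZMod d) (j+1) = 0 := by
    rw [← hφdc, hc0, map_zero]
  have hdc1 : cseq (1 : ZMod d) (j+2) = 1 := by
    rw [← hφdc, hδ1, _root_.map_one]
  have h6 : 6 ∣ (j+1) := by
    have hr6 : (j+1) % 6 < 6 := Nat.mod_lt _ (by norm_num)
    have e0 : cseq (1:ZMod d) ((j+1) % 6) = 0 := by
      rw [← cseq_one_mul_six_add ((j+1)/6) ((j+1) % 6),
        show 6*((j+1)/6) + (j+1) % 6 = j + 1 by omega]
      exact hdc0
    interval_cases h : (j+1) % 6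
    · omega
    · rw [cseq_one] at e0; exact absurd e0 one_ne_zero
    · rw [v2] at e0; exact absurd e0 one_ne_zero
    · exfalso
      have e1 : cseq (1:ZMod d) (j+2) = cseq (1:ZMod d) 4 := by
        rw [← cseq_one_mul_six_add ((j+1)/6) 4,
          show 6*((j+1)/6) + 4 = j + 2 by omega]
      rw [hdc1, v4] at e1
      have h2 : ((2:ℕ) : ZMod d) = 0 := by push_cast; linear_combination e1
      have := (ZMod.natCast_eq_zero_iff _ _).mp h2
      have := Nat.le_of_dvd (by norm_num) this
      omega
    · rw [v4] at e0
      rw [neg_eq_zero] at e0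
      exact absurd e0 one_ne_zero
    · rw [v5] at e0
      rw [neg_eq_zero] at e0
      exact absurd e0 one_ne_zero
  have cop6 : Nat.Coprime 6 p := by
    rw [show (6:ℕ) = 2*3 from rfl, Nat.coprime_mul_iff_left]
    constructor
    · exact (Nat.Prime.coprime_iff_not_dvd Nat.prime_two).mpr (by omega)
    · exact (Nat.Prime.coprime_iff_not_dvd Nat.prime_three).mpr (by omega)
  have h6p : 6*p ∣ j+1 := Nat.Coprime.mul_dvd_of_dvd_of_dvd cop6 h6 hpdvd
  have : 6*p ≤ j+1 := Nat.le_of_dvd (by omega) h6p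
  omega

/-- Family C, `d = 2`. -/
lemma red_case_C2 {p : ℕ} (hp : p.Prime) (hp5 : 5 ≤ p) (k : ZMod (p*2))
    (hkp : ZMod.castHom (dvd_mul_right p 2) (ZMod p) k = 2)
    (hkd : ZMod.castHom (dvd_mul_left 2 p) (ZMod 2) k = 1) :
    k ≠ 0 ∧ RedCond (p*2) k := by
  haveI hF : Fact (1 < p*2) := ⟨by omega⟩
  haveI : NeZero (p*2) := ⟨by omega⟩
  haveI : NeZero p := ⟨by omega⟩
  haveI : Fact (1 < p) := ⟨by omega⟩
  obtain ⟨hp2, hp3⟩ := prime_mod_facts hp hp5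
  have hφpc : ∀ m, ZMod.castHom (dvd_mul_right p 2) (ZMod p) (cseq k m)
      = cseq (2 : ZMod p) m := fun m => by rw [map_cseq, hkp]
  have hφdc : ∀ m, ZMod.castHom (dvd_mul_left 2 p) (ZMod 2) (cseq k m)
      = cseq (1 : ZMod 2) m := fun m => by rw [map_cseq, hkd]
  have v2 : cseq (1 : ZMod 2) 2 = 1 := by rw [cseq_add_two]; simp
  have hk0 : k ≠ 0 := by
    intro h
    rw [h, map_zero] at hkp
    have h2 : ((2:ℕ) : ZMod p) = 0 := by push_cast; rw [← hkp]
    have := (ZMod.natCast_eq_zero_iff _ _).mp h2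
    have := Nat.le_of_dvd (by norm_num) this
    omega
  refine ⟨hk0, ?_⟩
  have hpm3 : p % 3 = 1 ∨ p % 3 = 2 := by omega
  obtain ⟨i, t, s, hi2, hiub, hi3, hip⟩ :
      ∃ i t s, 2 ≤ i ∧ i + 2 ≤ 3*p ∧ i = 3*t + 2 ∧ i = p*s + 1 := by
    rcases hpm3 with h | h
    · exact ⟨p+1, p/3, 1, by omega, by omega, by omega, by omega⟩
    · exact ⟨2*p+1, 2*(p/3)+1, 2, by omega, by omega, by omega, by omega⟩
  have hneg2 : (-1 : ZMod 2) = 1 := by decide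
  have cop2 : Nat.Coprime p 2 := (Nat.coprime_primes hp Nat.prime_two).mpr (by omega)
  have hci : cseq k i = 1 := by
    apply zmod_eq_of_casts cop2
    · rw [_root_.map_one, hφpc, cseq_two, hip]
      push_cast [ZMod.natCast_self]
      ring
    · rw [_root_.map_one, hφdc, hi3, cseq_one_mul_three_add, v2, hneg2, one_pow, one_mul]
  refine ⟨i, hi2, ?_, Or.inl hci⟩
  apply le_size
  intro m hm hsol
  by_contra hcon
  push_neg at hcon
  obtain ⟨j, rfl⟩ : ∃ j, m = j + 1 := ⟨m-1, by omega⟩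
  have hs := (isSolution_replicate_iff k j).mp hsol
  have hc0 := hs.1
  have hpj : ((j+1 : ℕ) : ZMod p) = 0 := by
    have := congrArg (ZMod.castHom (dvd_mul_right p 2) (ZMod p)) hc0
    rw [hφpc, map_zero, cseq_two] at this
    exact_mod_cast this
  have hpdvd : p ∣ (j+1) := (ZMod.natCast_eq_zero_iff _ _).mp hpj
  have hdc0 : cseq (1 : ZMod 2) (j+1) = 0 := by
    rw [← hφdc, hc0, map_zero]
  have h3 : 3 ∣ (j+1) := by
    have hr3 : (j+1) % 3 < 3 := Nat.mod_lt _ (by norm_num)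
    have e0 : cseq (1:ZMod 2) ((j+1) % 3) = 0 := by
      have := cseq_one_mul_three_add (R := ZMod 2) ((j+1)/3) ((j+1) % 3)
      rw [show 3*((j+1)/3) + (j+1) % 3 = j + 1 by omega, hneg2, one_pow, one_mul] at this
      rw [← this]
      exact hdc0
    interval_cases h : (j+1) % 3
    · omega
    · rw [cseq_one] at e0; exact absurd e0 one_ne_zero
    · rw [v2] at e0; exact absurd e0 one_ne_zero
  have cop3 : Nat.Coprime 3 p := (Nat.Prime.coprime_iff_not_dvd Nat.prime_three).mpr (by omega)
  have h3p : 3*p ∣ j+1 := Nat.Coprime.mul_dvd_of_dvd_of_dvd cop3 h3 hpdvd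
  have : 3*p ≤ j+1 := Nat.le_of_dvd (by omega) h3p
  omega

end Witnesses

section Irreducibles

/-- `k = ±2`-type elements are never reducible. -/
lemma not_red_aux {N : ℕ} [Fact (1 < N)] (k : ZMod N)
    (hcs : ∀ m : ℕ, cseq k m = (m : ZMod N) ∨ cseq k m = -(m : ZMod N)) :
    ¬ RedCond N k := by
  haveI : NeZero N := ⟨by have := Fact.out (p := 1 < N); omega⟩
  rintro ⟨i, hi2, hile, hδ⟩
  obtain ⟨j, rfl⟩ : ∃ j, i = j + 2 := ⟨i-2, by omega⟩
  have hI : ((j+2 : ℕ) : ZMod N) = 1 ∨ ((j+2 : ℕ) : ZMod N) = -1 := by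
    rcases hcs (j+2) with h | h <;> rcases hδ with h1 | h1 <;> rw [h] at h1
    · left; exact h1
    · right; exact h1
    · right; linear_combination -h1
    · left; linear_combination -h1
  rcases hI with h1 | h1
  · have hm0 : cseq k (j+1) = 0 := by
      rcases hcs (j+1) with h | h <;> rw [h] <;> push_cast at h1 ⊢
      · linear_combination h1
      · linear_combination -h1
    have hsol : IsSolutionE (List.replicate (j+1) k) :=
      (isSolution_replicate_iff k j).mpr ⟨hm0, hδ⟩
    have := size_le k (by omega) hsol
    omega
  · have hm0 : cseq k (j+3) = 0 := by
      rcases hcs (j+3) with h | h <;> rw [h] <;> push_cast at h1 ⊢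
      · linear_combination h1
      · linear_combination -h1
    have hm1 : cseq k (j+4) = 1 ∨ cseq k (j+4) = -1 := by
      rcases hcs (j+4) with h | h <;> rw [h] <;> push_cast at h1 ⊢
      · left; linear_combination h1
      · right; linear_combination -h1
    have hsol : IsSolutionE (List.replicate (j+3) k) :=
      (isSolution_replicate_iff k (j+2)).mpr ⟨hm0, hm1⟩
    have := size_le k (by omega) hsol
    omega

lemma not_red_field {p : ℕ} [Fact (1 < p)] {K : Type*} [Field K]
    (φ : ZMod p →+* K) (hφ : Function.Injective φ) (k : ZMod p) (lam : K)
    (hroot : lam * lam = φ k * lam - 1) (hsq : lam * lam ≠ 1) :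
    ¬ RedCond p k := by
  haveI : NeZero p := ⟨by have := Fact.out (p := 1 < p); omega⟩
  rintro ⟨i, hi2, hile, hδ⟩
  set μ := φ k - lam with hμdef
  have hlm : lam * μ = 1 := by rw [hμdef]; linear_combination -hroot
  have hlam0 : lam ≠ 0 := fun h => by rw [h, zero_mul] at hlm; exact zero_ne_one hlm
  have hne : lam - μ ≠ 0 := by
    intro h
    apply hsq
    have hlμ : lam = μ := by linear_combination h
    calc lam * lam = lam * μ := by rw [← hlμ]
    _ = 1 := hlm
  have hsum : φ k = lam + μ := by rw [hμdef]; ring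
  have key : ∀ m, φ (cseq k m) * (lam - μ) = lam^m - μ^m := by
    have H : ∀ m, (φ (cseq k m) * (lam - μ) = lam^m - μ^m) ∧
        (φ (cseq k (m+1)) * (lam - μ) = lam^(m+1) - μ^(m+1)) := by
      intro m
      induction m with
      | zero => simp
      | succ n ih =>
        refine ⟨ih.2, ?_⟩
        rw [cseq_add_two, map_sub, _root_.map_mul, hsum]
        have h1 := ih.1
        have h2 := ih.2
        linear_combination (lam + μ) * h2 - h1 + (lam^n - μ^n) * hlm
    exact fun m => (H m).1
  have solat : ∀ (m : ℕ) (η : K), (η = 1 ∨ η = -1) → lam^(m+1) = η →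
      monomialSize p k ≤ m+1 := by
    intro m η hη hl
    have hmu : μ^(m+1) = η := by
      have hp1 : lam^(m+1) * μ^(m+1) = 1 := by rw [← mul_pow, hlm, one_pow]
      rw [hl] at hp1
      rcases hη with rfl | rfl
      · rw [one_mul] at hp1; exact hp1
      · linear_combination -hp1
    have hc0 : cseq k (m+1) = 0 := by
      have h3 := key (m+1)
      rw [hl, hmu, sub_self] at h3
      rcases mul_eq_zero.mp h3 with h' | h'
      · exact hφ (by rw [h', map_zero])
      · exact absurd h' hne
    have hc1 : cseq k (m+2) = 1 ∨ cseq k (m+2) = -1 := by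
      have h4 := key (m+2)
      have e1 : lam^(m+2) = η * lam := by
        have e : lam^(m+2) = lam * lam^(m+1) := by ring
        rw [e, hl]; ring
      have e2 : μ^(m+2) = η * μ := by
        have e : μ^(m+2) = μ * μ^(m+1) := by ring
        rw [e, hmu]; ring
      rw [e1, e2] at h4
      have h5 : (φ (cseq k (m+2)) - η) * (lam - μ) = 0 := by linear_combination h4
      have hz : φ (cseq k (m+2)) = η := by
        rcases mul_eq_zero.mp h5 with h' | h'
        · linear_combination h'
        · exact absurd h' hne
      rcases hη with rfl | rfl
      · left; exact hφ (by rw [hz, _root_.map_one])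
      · right; exact hφ (by rw [hz, map_neg, _root_.map_one])
    exact size_le k (by omega) ((isSolution_replicate_iff k m).mpr ⟨hc0, hc1⟩)
  obtain ⟨j, rfl⟩ : ∃ j, i = j+2 := ⟨i-2, by omega⟩
  have hpow : lam^(j+2) * μ^(j+2) = 1 := by rw [← mul_pow, hlm, one_pow]
  have heq := (key (j+2)).symm
  rcases hδ with h1 | h1
  · rw [h1, _root_.map_one, one_mul] at heq
    have hfact : (lam^(j+2) - lam) * (lam^(j+2) + μ) = 0 := by
      linear_combination lam^(j+2) * heq + hpow - hlm
    rcases mul_eq_zero.mp hfact with h' | h'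
    · have hl : lam^(j+1) = 1 := by
        apply mul_left_cancel₀ hlam0
        rw [mul_one]
        linear_combination h'
      have := solat j 1 (Or.inl rfl) hl
      omega
    · have hl : lam^(j+3) = -1 := by
        have e : lam^(j+3) = lam * lam^(j+2) := by ring
        rw [e]
        linear_combination lam * h' - hlm
      have := solat (j+2) (-1) (Or.inr rfl) hl
      omega
  · rw [h1, map_neg, _root_.map_one] at heq
    have hfact : (lam^(j+2) + lam) * (lam^(j+2) - μ) = 0 := by
      linear_combination lam^(j+2) * heq + hpow - hlm
    rcases mul_eq_zero.mp hfact with h' | h'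
    · have hl : lam^(j+1) = -1 := by
        apply mul_left_cancel₀ hlam0
        rw [mul_neg_one]
        linear_combination h'
      have := solat j (-1) (Or.inr rfl) hl
      omega
    · have hl : lam^(j+3) = 1 := by
        have e : lam^(j+3) = lam * lam^(j+2) := by ring
        rw [e]
        linear_combination lam * h' + hlm
      have := solat (j+2) 1 (Or.inl rfl) hl
      omega

lemma not_red_prime (p : ℕ) (hp : p.Prime) (k : ZMod p) (hk : k ≠ 0) :
    ¬ RedCond p k := by
  haveI : Fact p.Prime := ⟨hp⟩
  haveI : Fact (1 < p) := ⟨hp.one_lt⟩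
  by_cases h2 : k = 2 ∨ k = -2
  · apply not_red_aux
    intro m
    rcases h2 with rfl | rfl
    · left; exact cseq_two m
    · have hm := cseq_neg (2 : ZMod p) m
      rw [cseq_two] at hm
      rcases Nat.even_or_odd (m+1) with he | ho
      · left; rw [hm, he.neg_one_pow, one_mul]
      · right; rw [hm, ho.neg_one_pow, neg_one_mul]
  · push_neg at h2
    set f : Polynomial (ZMod p) :=
      Polynomial.C 1 * Polynomial.X^2 + Polynomial.C (-k) * Polynomial.X + Polynomial.C 1
      with hf
    have hdeg : f.degree = 2 := Polynomial.degree_quadratic one_ne_zero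
    have hsplits := Polynomial.SplittingField.splits f
    obtain ⟨lam, hlam⟩ := hsplits.exists_eval_eq_zero
      (by rw [Polynomial.degree_map, hdeg]; decide)
    rw [Polynomial.eval_map] at hlam
    set φ := algebraMap (ZMod p) f.SplittingField with hφdef
    have hinj : Function.Injective φ := φ.injective
    have hroot : lam * lam = φ k * lam - 1 := by
      have hlam' : Polynomial.eval₂ φ lam
          (Polynomial.C 1 * Polynomial.X^2 + Polynomial.C (-k) * Polynomial.X
            + Polynomial.C 1) = 0 := hlam
      simp [Polynomial.eval₂_add, Polynomial.eval₂_mul, Polynomial.eval₂_C,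
        Polynomial.eval₂_X, Polynomial.eval₂_X_pow] at hlam'
      linear_combination hlam' 
    have hsq : lam * lam ≠ 1 := by
      intro hs
      have h1 : (lam - 1) * (lam + 1) = 0 := by linear_combination hs
      rcases mul_eq_zero.mp h1 with h | h
      · have hl1 : lam = 1 := by linear_combination h
        have : φ k = φ 2 := by
          rw [hl1] at hroot
          rw [map_ofNat]
          linear_combination -hroot
        exact h2.1 (hinj this)
      · have hl1 : lam = -1 := by linear_combination h
        have : φ k = φ (-2) := by
          rw [hl1] at hroot
          rw [map_neg, map_ofNat]
          linear_combination hroot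
        exact h2.2 (hinj this)
    exact not_red_field φ hinj k lam hroot hsq

lemma not_red_of_checks {N : ℕ} [Fact (1 < N)] {k : ZMod N} {B : ℕ}
    (h1 : ∃ n ∈ Finset.range (B+1), 0 < n ∧ cseq k n = 0 ∧
          (cseq k (n+1) = 1 ∨ cseq k (n+1) = -1))
    (h2 : ∀ i ∈ Finset.range (B+1), 2 ≤ i → (cseq k i = 1 ∨ cseq k i = -1) →
          ∃ m ∈ Finset.range (i+2), 0 < m ∧ cseq k m = 0 ∧
            (cseq k (m+1) = 1 ∨ cseq k (m+1) = -1)) :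
    ¬ RedCond N k := by
  haveI : NeZero N := ⟨by have := Fact.out (p := 1 < N); omega⟩
  rintro ⟨i, hi2, hile, hδ⟩
  obtain ⟨n, hnB, hn0, hc0, hc1⟩ := h1
  have hnB' : n < B + 1 := Finset.mem_range.mp hnB
  obtain ⟨j, rfl⟩ : ∃ j, n = j+1 := ⟨n-1, by omega⟩
  have hsize : monomialSize N k ≤ j+1 :=
    size_le k (by omega) ((isSolution_replicate_iff k j).mpr ⟨hc0, hc1⟩)
  have hiB : i ∈ Finset.range (B+1) := Finset.mem_range.mpr (by omega)
  obtain ⟨m, hmlt, hm0, hd0, hd1⟩ := h2 i hiB hi2 hδ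
  have hmlt' : m < i + 2 := Finset.mem_range.mp hmlt
  obtain ⟨j', rfl⟩ : ∃ j', m = j'+1 := ⟨m-1, by omega⟩
  have : monomialSize N k ≤ j'+1 :=
    size_le k (by omega) ((isSolution_replicate_iff k j').mpr ⟨hd0, hd1⟩)
  omega

end Irreducibles

section DecideLemmas

set_option maxRecDepth 100000

lemma dec_check4 : ∀ k : ZMod 4, k ≠ 0 →
    ((∃ n ∈ Finset.range 5, 0 < n ∧ cseq k n = 0 ∧
          (cseq k (n+1) = 1 ∨ cseq k (n+1) = -1)) ∧
     (∀ i ∈ Finset.range 5, 2 ≤ i → (cseq k i = 1 ∨ cseq k i = -1) →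
          ∃ m ∈ Finset.range (i+2), 0 < m ∧ cseq k m = 0 ∧
            (cseq k (m+1) = 1 ∨ cseq k (m+1) = -1))) := by decide

lemma dec_check6 : ∀ k : ZMod 6, k ≠ 0 →
    ((∃ n ∈ Finset.range 7, 0 < n ∧ cseq k n = 0 ∧
          (cseq k (n+1) = 1 ∨ cseq k (n+1) = -1)) ∧
     (∀ i ∈ Finset.range 7, 2 ≤ i → (cseq k i = 1 ∨ cseq k i = -1) →
          ∃ m ∈ Finset.range (i+2), 0 < m ∧ cseq k m = 0 ∧
            (cseq k (m+1) = 1 ∨ cseq k (m+1) = -1))) := by decide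

lemma dec_check8 : ∀ k : ZMod 8, k ≠ 0 →
    ((∃ n ∈ Finset.range 9, 0 < n ∧ cseq k n = 0 ∧
          (cseq k (n+1) = 1 ∨ cseq k (n+1) = -1)) ∧
     (∀ i ∈ Finset.range 9, 2 ≤ i → (cseq k i = 1 ∨ cseq k i = -1) →
          ∃ m ∈ Finset.range (i+2), 0 < m ∧ cseq k m = 0 ∧
            (cseq k (m+1) = 1 ∨ cseq k (m+1) = -1))) := by decide

lemma dec_check12 : ∀ k : ZMod 12, k ≠ 0 →
    ((∃ n ∈ Finset.range 13, 0 < n ∧ cseq k n = 0 ∧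
          (cseq k (n+1) = 1 ∨ cseq k (n+1) = -1)) ∧
     (∀ i ∈ Finset.range 13, 2 ≤ i → (cseq k i = 1 ∨ cseq k i = -1) →
          ∃ m ∈ Finset.range (i+2), 0 < m ∧ cseq k m = 0 ∧
            (cseq k (m+1) = 1 ∨ cseq k (m+1) = -1))) := by decide

lemma dec_check24 : ∀ k : ZMod 24, k ≠ 0 →
    ((∃ n ∈ Finset.range 25, 0 < n ∧ cseq k n = 0 ∧
          (cseq k (n+1) = 1 ∨ cseq k (n+1) = -1)) ∧
     (∀ i ∈ Finset.range 25, 2 ≤ i → (cseq k i = 1 ∨ cseq k i = -1) →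
          ∃ m ∈ Finset.range (i+2), 0 < m ∧ cseq k m = 0 ∧
            (cseq k (m+1) = 1 ∨ cseq k (m+1) = -1))) := by decide

end DecideLemmas

/-- `N ≥ 2` is monomially irreducible iff `N` is prime or
`N ∈ {4, 6, 8, 12, 24}`. -/
theorem stmt_0 (N : ℕ) (hN : 2 ≤ N) :
    MonomiallyIrreducible N ↔ N.Prime ∨ N ∈ ({4, 6, 8, 12, 24} : Set ℕ) := by
  haveI : Fact (1 < N) := ⟨hN⟩
  constructor
  · intro hmono
    by_contra hcon
    push_neg at hcon
    obtain ⟨hnp, hnmem⟩ := hcon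
    have hred : ∃ k : ZMod N, k ≠ 0 ∧ RedCond N k := by
      by_cases hsq : ∃ p, p.Prime ∧ p % 2 = 1 ∧ p*p ∣ N
      · -- family A
        obtain ⟨p, hp, hodd, hpp⟩ := hsq
        have hp2 : 2 ≤ p := hp.two_le
        have hp3 : 3 ≤ p := by omega
        obtain ⟨c, hc⟩ := hpp
        have hc0 : 0 < c := by
          rcases Nat.eq_zero_or_pos c with rfl | h
          · rw [mul_zero] at hc; omega
          · exact h
        refine ⟨((p*c : ℕ) : ZMod N), ?_, ?_⟩
        · intro h
          have hdvd := (ZMod.natCast_eq_zero_iff _ _).mp h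
          have hle := Nat.le_of_dvd (by positivity) hdvd
          nlinarith
        · apply red_of_sq_zero _ ?_ ?_ ?_
          · intro h
            have hdvd := (ZMod.natCast_eq_zero_iff _ _).mp h
            have hle := Nat.le_of_dvd (by positivity) hdvd
            nlinarith
          · have : (((p*c)*(p*c) : ℕ) : ZMod N) = 0 := by
              rw [ZMod.natCast_eq_zero_iff]
              exact ⟨c, by rw [hc]; ring⟩
            push_cast at this ⊢
            linear_combination this
          · intro h
            have h' : ((2*(p*c) : ℕ) : ZMod N) = 0 := by push_cast; push_cast at h; linear_combination h
            have hdvd := (ZMod.natCast_eq_zero_iff _ _).mp h'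
            have hle := Nat.le_of_dvd (by positivity) hdvd
            nlinarith
      · by_cases h16 : 16 ∣ N
        · -- family B
          obtain ⟨c, hc⟩ := h16
          have hc0 : 0 < c := by
            rcases Nat.eq_zero_or_pos c with rfl | h
            · rw [mul_zero] at hc; omega
            · exact h
          refine ⟨((4*c : ℕ) : ZMod N), ?_, ?_⟩
          · intro h
            have hdvd := (ZMod.natCast_eq_zero_iff _ _).mp h
            have hle := Nat.le_of_dvd (by positivity) hdvd
            omega
          · apply red_of_sq_zero _ ?_ ?_ ?_
            · intro h
              have hdvd := (ZMod.natCast_eq_zero_iff _ _).mp h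
              have hle := Nat.le_of_dvd (by positivity) hdvd
              omega
            · have : (((4*c)*(4*c) : ℕ) : ZMod N) = 0 := by
                rw [ZMod.natCast_eq_zero_iff]
                exact ⟨c, by rw [hc]; ring⟩
              push_cast at this ⊢
              linear_combination this
            · intro h
              have h' : ((2*(4*c) : ℕ) : ZMod N) = 0 := by push_cast; push_cast at h; linear_combination h
              have hdvd := (ZMod.natCast_eq_zero_iff _ _).mp h'
              have hle := Nat.le_of_dvd (by positivity) hdvd
              omega
        · -- family C
          have hex : ∃ p, p.Prime ∧ 5 ≤ p ∧ p ∣ N := by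
            by_contra hno
            push_neg at hno
            have hN0 : N ≠ 0 := by omega
            have h24q : (24:ℕ).factorization = Finsupp.single 2 3 + Finsupp.single 3 1 := by
              rw [show (24:ℕ) = 2^3 * 3 by norm_num,
                Nat.factorization_mul (by norm_num) (by norm_num),
                Nat.Prime.factorization_pow (by norm_num),
                Nat.Prime.factorization (by norm_num)]
            have h24 : N ∣ 24 := by
              rw [← Nat.factorization_le_iff_dvd hN0 (by norm_num)]
              rw [Finsupp.le_def]
              intro q
              rw [h24q, Finsupp.add_apply, Finsupp.single_apply, Finsupp.single_apply]
              by_cases hq2 : 2 = q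
              · subst hq2
                have : N.factorization 2 ≤ 3 := by
                  by_contra hgt
                  push_neg at hgt
                  have h2f : 4 ≤ N.factorization 2 := hgt
                  refine h16 ?_
                  calc (16:ℕ) = 2^4 := by norm_num
                  _ ∣ 2^(N.factorization 2) := pow_dvd_pow 2 h2f
                  _ ∣ N := Nat.ordProj_dvd N 2
                simpa using this
              · by_cases hq3 : 3 = q
                · subst hq3
                  have : N.factorization 3 ≤ 1 := by
                    by_contra hgt
                    push_neg at hgt
                    have h3f : 2 ≤ N.factorization 3 := hgt
                    refine hsq ⟨3, by norm_num, by norm_num, ?_⟩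
                    calc (3*3:ℕ) = 3^2 := by norm_num
                    _ ∣ 3^(N.factorization 3) := pow_dvd_pow 3 h3f
                    _ ∣ N := Nat.ordProj_dvd N 3
                  simpa using this
                · have : N.factorization q = 0 := by
                    rw [Nat.factorization_eq_zero_iff]
                    by_contra hcc
                    push_neg at hcc
                    obtain ⟨hqp, hqd, _⟩ := hcc
                    have hq5 : ¬ 5 ≤ q := fun h5 => (hno q hqp h5) hqd
                    have := hqp.two_le
                    have hq4 : q = 4 := by omega
                    rw [hq4] at hqp
                    norm_num at hqp
                  rw [this, if_neg hq2, if_neg hq3]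
                  omega
            have hle : N ≤ 24 := Nat.le_of_dvd (by norm_num) h24
            simp only [Set.mem_insert_iff, Set.mem_singleton_iff] at hnmem
            push_neg at hnmem
            interval_cases N <;>
              first
                | omega
                | exact absurd h24 (by decide)
                | exact hnp (by norm_num)
          obtain ⟨p, hp, hp5, hpN⟩ := hex
          obtain ⟨d, rfl⟩ : ∃ d, N = p * d := hpN
          have hpp : ¬ (p*p ∣ p*d) :=
            fun h => hsq ⟨p, hp, (prime_mod_facts hp hp5).1, h⟩
          have hd0 : d ≠ 0 := by rintro rfl; rw [mul_zero] at hN; omega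
          have hd1 : d ≠ 1 := by
            rintro rfl
            rw [mul_one] at hnp
            exact hnp hp
          have cop : Nat.Coprime p d := by
            rw [Nat.Prime.coprime_iff_not_dvd hp]
            intro hdvd
            exact hpp (mul_dvd_mul_left p hdvd)
          rcases Nat.lt_or_ge d 3 with h3 | h3
          · have hd2' : d = 2 := by omega
            subst hd2'
            obtain ⟨r, hr1, hr2⟩ := Nat.chineseRemainder cop 2 1
            refine ⟨((r:ℕ) : ZMod (p*2)), ?_⟩
            apply red_case_C2 hp hp5
            · rw [map_natCast]
              have := (ZMod.natCast_eq_natCast_iff r 2 p).mpr hr1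
              simpa using this
            · rw [map_natCast]
              have := (ZMod.natCast_eq_natCast_iff r 1 2).mpr hr2
              simpa using this
          · obtain ⟨r, hr1, hr2⟩ := Nat.chineseRemainder cop 2 1
            refine ⟨((r:ℕ) : ZMod (p*d)), ?_⟩
            apply red_case_C3 hp hp5 h3 cop
            · rw [map_natCast]
              have := (ZMod.natCast_eq_natCast_iff r 2 p).mpr hr1
              simpa using this
            · rw [map_natCast]
              have := (ZMod.natCast_eq_natCast_iff r 1 d).mpr hr2
              simpa using this
    obtain ⟨k, hk0, hredk⟩ := hred
    exact (monoIrr_iff.mp hmono k hk0) hredk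
  · intro h
    rw [monoIrr_iff]
    intro k hk
    rcases h with hp | hmem
    · exact not_red_prime N hp k hk
    · simp only [Set.mem_insert_iff, Set.mem_singleton_iff] at hmem
      rcases hmem with rfl | rfl | rfl | rfl | rfl
      · exact not_red_of_checks (dec_check4 k hk).1 (dec_check4 k hk).2
      · exact not_red_of_checks (dec_check6 k hk).1 (dec_check6 k hk).2
      · exact not_red_of_checks (dec_check8 k hk).1 (dec_check8 k hk).2
      · exact not_red_of_checks (dec_check12 k hk).1 (dec_check12 k hk).2
      · exact not_red_of_checks (dec_check24 k hk).1 (dec_check24 k hk).2
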